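/- Let J be a finite index set; for each j ∈ J let r_j ≥ 2 be an integer and b_j an integer coprime to r_j, and let K ∈ ℚ. For n ≥ 0 define χ(n) = 1 + ((2n³+3n²+n)/12)·K + (n/12)·( 24 − ∑_{j∈J} (r_j²−1)/r_j ) + ∑_{j∈J} ( −[−n]_{r_j}·(r_j²−1)/(12 r_j) + ∑_{k=1}^{[−n]_{r_j} − 1} [b_j·k]_{r_j}·(r_j − [b_j·k]_{r_j})/(2 r_j) ). Then in ℚ⟦t⟧: ∑_{n≥0} χ(n)·t^n = (1+t)·((1−t)²)⁻¹ + (K/2)·(t+t²)·((1−t)⁴)⁻¹ − ∑_{j∈J} ((1−t)·(1−t^{r_j}))⁻¹ · ∑_{i=1}^{r_j−1} ([b_j·i]_{r_j}·(r_j − [b_j·i]_{r_j})/(2 r_j))·t^i, where all inverses are of units in ℚ⟦t⟧. -/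

import Mathlib

open PowerSeries

lemma mk_delta : PowerSeries.mk (fun n => if n = 0 then (1:ℚ) else 0) = 1 := by
  ext n; cases n <;> simp

lemma mk_mul_one_sub (f g : ℕ → ℚ) (h0 : g 0 = f 0) (hs : ∀ n, g (n+1) = f (n+1) - f n) :
    PowerSeries.mk f * (1 - X) = PowerSeries.mk g := by
  ext n
  rw [mul_sub, mul_one, map_sub]
  cases n with
  | zero => simp [h0]
  | succ n =>
    rw [← pow_one (X : PowerSeries ℚ), coeff_mul_X_pow', if_pos (by omega)]
    simp [hs n]

lemma inv_one_sub_sq :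
    (((1 - X : PowerSeries ℚ)) ^ 2)⁻¹ = PowerSeries.mk (fun n => (n : ℚ) + 1) := by
  rw [PowerSeries.inv_eq_iff_mul_eq_one (by simp)]
  calc PowerSeries.mk (fun n => (n : ℚ) + 1) * (1 - X) ^ 2
      = (PowerSeries.mk (fun n => (n : ℚ) + 1) * (1 - X)) * (1 - X) := by ring
    _ = PowerSeries.mk (fun _ => (1:ℚ)) * (1 - X) := by
        rw [mk_mul_one_sub _ (fun _ => (1:ℚ))] <;> intros <;> push_cast <;> ring
    _ = 1 := by
        rw [mk_mul_one_sub _ (fun n => if n = 0 then (1:ℚ) else 0)]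
        · exact mk_delta
        · simp
        · intro n; simp

lemma inv_one_sub_four :
    (((1 - X : PowerSeries ℚ)) ^ 4)⁻¹
      = PowerSeries.mk (fun n => ((n:ℚ)+1)*((n:ℚ)+2)*((n:ℚ)+3)/6) := by
  rw [PowerSeries.inv_eq_iff_mul_eq_one (by simp)]
  calc PowerSeries.mk (fun n => ((n:ℚ)+1)*((n:ℚ)+2)*((n:ℚ)+3)/6) * (1 - X) ^ 4
      = (((PowerSeries.mk (fun n => ((n:ℚ)+1)*((n:ℚ)+2)*((n:ℚ)+3)/6) * (1 - X)) * (1-X)) * (1-X)) * (1-X) := by ring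
    _ = ((PowerSeries.mk (fun n => ((n:ℚ)+1)*((n:ℚ)+2)/2) * (1-X)) * (1-X)) * (1-X) := by
        rw [mk_mul_one_sub _ (fun n => ((n:ℚ)+1)*((n:ℚ)+2)/2)] <;> intros <;> push_cast <;> ring
    _ = ((PowerSeries.mk (fun n => (n:ℚ)+1)) * (1-X)) * (1-X) := by
        rw [mk_mul_one_sub _ (fun n => (n:ℚ)+1)] <;> intros <;> push_cast <;> ring
    _ = (PowerSeries.mk (fun _ => (1:ℚ))) * (1-X) := by
        rw [mk_mul_one_sub _ (fun _ => (1:ℚ))] <;> intros <;> push_cast <;> ring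
    _ = 1 := by
        rw [mk_mul_one_sub _ (fun n => if n = 0 then (1:ℚ) else 0)]
        · exact mk_delta
        · simp
        · intro n; simp

lemma geo_mul (r : ℕ) (hr : 1 ≤ r) :
    PowerSeries.mk (fun n => if r ∣ n then (1:ℚ) else 0) * (1 - X ^ r) = 1 := by
  have key : ∀ n, r ≤ n → (r ∣ n ↔ r ∣ n - r) := by
    intro n h
    constructor
    · intro hd; exact Nat.dvd_sub hd dvd_rfl
    · intro hd; have := Nat.dvd_add hd (dvd_refl r); rwa [Nat.sub_add_cancel h] at this
  ext n
  rw [mul_sub, mul_one, map_sub, coeff_mk, coeff_mul_X_pow', coeff_one]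
  by_cases h0 : n = 0
  · subst h0
    rw [if_pos (dvd_zero r), if_neg (by omega), if_pos rfl]; ring
  · rw [if_neg h0]
    by_cases h : r ≤ n
    · rw [if_pos h, coeff_mk]
      by_cases hd : r ∣ n
      · rw [if_pos hd, if_pos ((key n h).mp hd)]; ring
      · rw [if_neg hd, if_neg (fun c => hd ((key n h).mpr c))]; ring
    · rw [if_neg h, if_neg (fun hd => h (Nat.le_of_dvd (by omega) hd))]; ring

lemma inv_one_sub_mul (r : ℕ) (hr : 1 ≤ r) :
    ((1 - X : PowerSeries ℚ) * (1 - X ^ r))⁻¹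
      = PowerSeries.mk (fun n => ((n / r + 1 : ℕ) : ℚ)) := by
  rw [PowerSeries.inv_eq_iff_mul_eq_one (by simp [zero_pow (by omega : r ≠ 0)])]
  calc PowerSeries.mk (fun n => ((n / r + 1 : ℕ) : ℚ)) * ((1 - X) * (1 - X ^ r))
      = (PowerSeries.mk (fun n => ((n / r + 1 : ℕ) : ℚ)) * (1 - X)) * (1 - X ^ r) := by ring
    _ = PowerSeries.mk (fun n => if r ∣ n then (1:ℚ) else 0) * (1 - X ^ r) := by
        rw [mk_mul_one_sub _ (fun n => if r ∣ n then (1:ℚ) else 0)]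
        · simp
        · intro n
          rw [Nat.succ_div]
          by_cases h : r ∣ n + 1 <;> simp [h] <;> push_cast <;> ring
    _ = 1 := geo_mul r hr

lemma emod_eq_of_cong (r a c : ℤ) (h : r ∣ a - c) (h0 : 0 ≤ c) (h1 : c < r) : a % r = c := by
  have : a % r = c % r := Int.emod_eq_emod_iff_emod_sub_eq_zero.2 (Int.emod_eq_zero_of_dvd h)
  rw [this, Int.emod_eq_of_lt h0 h1]

-- (-x) % r = r - x % r when r does not divide x
lemma neg_emod_val (r : ℕ) (hr : 1 ≤ r) (x : ℤ) (hx : ¬ ((r:ℤ) ∣ x)) :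
    (-x) % (r:ℤ) = (r:ℤ) - x % (r:ℤ) := by
  have h0 : (0:ℤ) < r := by exact_mod_cast hr
  have h1 : 0 ≤ x % r := Int.emod_nonneg x (by omega)
  have h2 : x % r < r := Int.emod_lt_of_pos x h0
  have h3 : x % r ≠ 0 := fun h => hx (Int.dvd_of_emod_eq_zero h)
  refine emod_eq_of_cong _ _ _ ?_ (by omega) (by omega)
  have := Int.emod_add_mul_ediv x r
  exact ⟨-1 - x / r, by linarith⟩

lemma res_mem (r : ℕ) (hr : 1 ≤ r) (b : ℤ) (hb : IsCoprime b (r:ℤ)) (x : ℤ)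
    (hx : ¬ ((r:ℤ) ∣ x)) : ((b * x) % (r:ℤ)).toNat ∈ Finset.Icc 1 (r - 1) := by
  have h0 : (0:ℤ) < r := by exact_mod_cast hr
  have h1 : 0 ≤ (b * x) % r := Int.emod_nonneg _ (by omega)
  have h2 : (b * x) % r < r := Int.emod_lt_of_pos _ h0
  have h3 : (b * x) % r ≠ 0 := by
    intro h
    exact hx (hb.symm.dvd_of_dvd_mul_left (Int.dvd_of_emod_eq_zero h))
  simp only [Finset.mem_Icc]
  omega

lemma perm_sum (r : ℕ) (hr : 1 ≤ r) (b : ℤ) (hb : IsCoprime b (r:ℤ)) (f : ℕ → ℚ) :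
    ∑ i ∈ Finset.Icc 1 (r - 1), f ((b * (i:ℕ) % (r:ℤ)).toNat)
      = ∑ u ∈ Finset.Icc 1 (r - 1), f u := by
  have h0 : (0:ℤ) < r := by exact_mod_cast hr
  obtain ⟨c, v, hcv⟩ := hb
  -- c * b + v * r = 1
  have hinv : ∀ x : ℤ, (c * (b * x)) % r = x % r := by
    intro x
    rw [Int.emod_eq_emod_iff_emod_sub_eq_zero]
    refine Int.emod_eq_zero_of_dvd ⟨-v * x, ?_⟩
    have hcb : c * b = 1 - v * r := by linarith
    have : c * (b * x) - x = (c * b - 1) * x := by ring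
    rw [this, hcb]; ring
  have hbc : IsCoprime c (r:ℤ) := ⟨b, v, by linarith [hcv]⟩
  have hndvd : ∀ i : ℕ, i ∈ Finset.Icc 1 (r-1) → ¬ ((r:ℤ) ∣ (i:ℤ)) := by
    intro i hi hdvd
    simp only [Finset.mem_Icc] at hi
    have := Int.le_of_dvd (by exact_mod_cast hi.1) hdvd
    omega
  refine Finset.sum_nbij' (fun i => ((b * (i:ℕ)) % (r:ℤ)).toNat)
    (fun u => ((c * (u:ℕ)) % (r:ℤ)).toNat) ?_ ?_ ?_ ?_ ?_
  · intro i hi; exact res_mem r hr b ⟨c, v, hcv⟩ i (hndvd i hi)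
  · intro u hu; exact res_mem r hr c hbc u (hndvd u hu)
  · intro i hi
    simp only [Finset.mem_Icc] at hi
    have h1 : 0 ≤ (b * (i:ℤ)) % r := Int.emod_nonneg _ (by omega)
    have hmul : ∀ a x : ℤ, (a * (x % (r:ℤ))) % (r:ℤ) = (a * x) % (r:ℤ) := fun a x => by
      rw [Int.mul_emod, Int.emod_emod_of_dvd _ dvd_rfl, ← Int.mul_emod]
    rw [Int.toNat_of_nonneg h1, hmul, hinv]
    rw [Int.emod_eq_of_lt (by exact_mod_cast Nat.zero_le i) (by exact_mod_cast (by omega : i < r))]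
    exact Int.toNat_natCast i
  · intro u hu
    simp only [Finset.mem_Icc] at hu
    have h1 : 0 ≤ (c * (u:ℤ)) % r := Int.emod_nonneg _ (by omega)
    have hinv' : ∀ x : ℤ, (b * (c * x)) % r = x % r := by
      intro x
      rw [Int.emod_eq_emod_iff_emod_sub_eq_zero]
      refine Int.emod_eq_zero_of_dvd ⟨-v * x, ?_⟩
      have hcb : c * b = 1 - v * r := by linarith
      have : b * (c * x) - x = (c * b - 1) * x := by ring
      rw [this, hcb]; ring
    have hmul : ∀ a x : ℤ, (a * (x % (r:ℤ))) % (r:ℤ) = (a * x) % (r:ℤ) := fun a x => by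
      rw [Int.mul_emod, Int.emod_emod_of_dvd _ dvd_rfl, ← Int.mul_emod]
    rw [Int.toNat_of_nonneg h1, hmul, hinv']
    rw [Int.emod_eq_of_lt (by exact_mod_cast Nat.zero_le u) (by exact_mod_cast (by omega : u < r))]
    exact Int.toNat_natCast u
  · intro i _; rfl

lemma sum_id_q (N : ℕ) : ∑ u ∈ Finset.range N, (u:ℚ) = N*(N-1)/2 := by
  induction N with
  | zero => simp
  | succ n ih => rw [Finset.sum_range_succ, ih]; push_cast; ring

lemma sum_sq_q (N : ℕ) : ∑ u ∈ Finset.range N, (u:ℚ)^2 = N*(N-1)*(2*N-1)/6 := by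
  induction N with
  | zero => simp
  | succ n ih => rw [Finset.sum_range_succ, ih]; push_cast; ring

lemma w_total (r : ℕ) (hr : 1 ≤ r) :
    ∑ u ∈ Finset.Icc 1 (r-1), (u:ℚ)*((r:ℚ)-(u:ℚ))/(2*r) = ((r:ℚ)^2-1)/12 := by
  have hr0 : (r:ℚ) ≠ 0 := by exact_mod_cast (by omega : r ≠ 0)
  have hsub : Finset.Icc 1 (r-1) ⊆ Finset.range r := by
    intro u hu; simp only [Finset.mem_Icc] at hu; simp only [Finset.mem_range]; omega
  have hext : ∑ u ∈ Finset.range r, (u:ℚ)*((r:ℚ)-(u:ℚ))/(2*r)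
      = ∑ u ∈ Finset.Icc 1 (r-1), (u:ℚ)*((r:ℚ)-(u:ℚ))/(2*r) := by
    refine (Finset.sum_subset hsub ?_).symm
    intro u hu hnu
    simp only [Finset.mem_range] at hu
    simp only [Finset.mem_Icc] at hnu
    have : u = 0 := by omega
    subst this; simp
  rw [← hext]
  have : ∀ u ∈ Finset.range r, (u:ℚ)*((r:ℚ)-(u:ℚ))/(2*r)
      = ((r:ℚ)*(u:ℚ) - (u:ℚ)^2) / (2*r) := by intro u _; ring
  rw [Finset.sum_congr rfl this, ← Finset.sum_div, Finset.sum_sub_distrib, ← Finset.mul_sum,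
    sum_id_q, sum_sq_q]
  field_simp
  ring

lemma sym_sum (r : ℕ) (hr : 2 ≤ r) (b : ℤ) (hb : IsCoprime b (r:ℤ)) (m : ℕ) (hm : m < r)
    (G : ℤ → ℚ) (hG : ∀ x : ℤ, 1 ≤ x → x < r → G ((r:ℤ) - x) = G x) :
    ∑ k ∈ Finset.Icc (1:ℤ) ((m:ℤ)-1), G ((b*k) % (r:ℤ))
      = ∑ i ∈ Finset.Icc (r-m+1) (r-1), G ((b*(i:ℕ)) % (r:ℤ)) := by
  have h0 : (0:ℤ) < r := by exact_mod_cast (by omega : 0 < r)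
  refine Finset.sum_nbij' (fun k => r - k.toNat) (fun i => (r:ℤ) - i) ?_ ?_ ?_ ?_ ?_
  · intro k hk; simp only [Finset.mem_Icc] at hk ⊢; omega
  · intro i hi; simp only [Finset.mem_Icc] at hi ⊢; omega
  · intro k hk; simp only [Finset.mem_Icc] at hk; omega
  · intro i hi; simp only [Finset.mem_Icc] at hi; omega
  · intro k hk
    simp only [Finset.mem_Icc] at hk
    have hknd : ¬ ((r:ℤ) ∣ b * k) := by
      intro hdvd
      have : (r:ℤ) ∣ k := hb.symm.dvd_of_dvd_mul_left hdvd
      have := Int.le_of_dvd (by omega) this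
      omega
    have hcast : ((r - k.toNat : ℕ) : ℤ) = (r:ℤ) - k := by omega
    have step1 : (b * ((r - k.toNat : ℕ) : ℤ)) % r = (-(b*k)) % r := by
      rw [hcast]
      refine emod_eq_of_cong _ _ _ ?_ (Int.emod_nonneg _ (by omega)) (Int.emod_lt_of_pos _ h0)
      have := Int.emod_add_mul_ediv (-(b*k)) r
      refine ⟨b + (-(b*k))/r, ?_⟩
      have expand : b * ((r:ℤ) - k) - -(b * k) % ↑r = b * r + (-(b*k) - (-(b*k)) % r) := by ring
      rw [expand]
      have : -(b*k) - (-(b*k)) % r = r * ((-(b*k))/r) := by linarith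
      rw [this]; ring
    rw [step1, neg_emod_val r (by omega) _ hknd]
    have h1 : 1 ≤ (b*k) % r := by
      have := Int.emod_nonneg (b*k) (show (r:ℤ) ≠ 0 by omega)
      have hne : (b*k) % r ≠ 0 := fun h => hknd (Int.dvd_of_emod_eq_zero h)
      omega
    exact (hG _ h1 (Int.emod_lt_of_pos _ h0)).symm

lemma div_val (r m q n i : ℕ) (hr : 2 ≤ r) (hm : m < r) (hq : n + m = q * r)
    (hi1 : 1 ≤ i) (hi2 : i ≤ r - 1) :
    (if i ≤ n then (((n - i) / r + 1 : ℕ) : ℚ) else 0)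
      = (q:ℚ) - (if r < m + i then 1 else 0) := by
  by_cases hin : i ≤ n
  · rw [if_pos hin]
    by_cases hc : r < m + i
    · rw [if_pos hc]
      -- q ≥ 2
      have hq2 : 2 ≤ q := by
        rcases Nat.lt_or_ge q 2 with h | h
        · interval_cases q <;> omega
        · exact h
      obtain ⟨t, rfl⟩ : ∃ t, q = t + 2 := ⟨q - 2, by omega⟩
      have e : (t+2)*r = t*r + 2*r := by ring
      have e1 : (t+1)*r = t*r + 1*r := by ring
      have hdiv : (n - i) / r = t := by
        refine Nat.div_eq_of_lt_le ?_ ?_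
        · omega
        · rw [e1]; omega
      rw [hdiv]
      push_cast
      ring
    · rw [if_neg hc]
      have hq1 : 1 ≤ q := by
        rcases Nat.lt_or_ge q 1 with h | h
        · interval_cases q <;> omega
        · exact h
      obtain ⟨t, rfl⟩ : ∃ t, q = t + 1 := ⟨q - 1, by omega⟩
      have e : (t+1)*r = t*r + 1*r := by ring
      have hdiv : (n - i) / r = t := by
        refine Nat.div_eq_of_lt_le ?_ ?_
        · omega
        · rw [e]; omega
      rw [hdiv]
      push_cast
      ring
  · rw [if_neg hin]
    have hqle : q < 2 := by
      rcases Nat.lt_or_ge q 2 with h | h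
      · exact h
      · exfalso
        obtain ⟨t, rfl⟩ : ∃ t, q = t + 2 := ⟨q - 2, by omega⟩
        have e : (t+2)*r = t*r + 2*r := by ring
        omega
    interval_cases q
    · rw [if_neg (by omega)]; norm_num
    · rw [if_pos (by omega)]; norm_num

lemma perj (r : ℕ) (hr : 2 ≤ r) (b : ℤ) (hb : IsCoprime b (r:ℤ)) (n : ℕ) :
    (-((((-(n : ℤ)) % (r : ℤ)) : ℤ) : ℚ) * ((r : ℚ) ^ 2 - 1) / (12 * r)
      + ∑ k ∈ Finset.Icc (1 : ℤ) ((-(n : ℤ)) % (r : ℤ) - 1),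
          (((b * k) % (r : ℤ) : ℤ) : ℚ) * ((r : ℚ) - (((b * k) % (r : ℤ) : ℤ) : ℚ)) / (2 * r))
      + ∑ i ∈ Finset.Icc 1 (r - 1),
          ((((b * (i:ℕ)) % (r : ℤ) : ℤ) : ℚ) * ((r : ℚ) - (((b * (i:ℕ)) % (r : ℤ) : ℤ) : ℚ)) / (2 * r))
            * (if i ≤ n then (((n - i) / r + 1 : ℕ) : ℚ) else 0)
      = ((n : ℚ) / 12) * (((r : ℚ) ^ 2 - 1) / (r : ℚ)) := by
  have hrz : (0:ℤ) < (r:ℤ) := by exact_mod_cast (by omega : 0 < r)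
  set m : ℕ := ((-(n : ℤ)) % (r : ℤ)).toNat with hmdef
  have hm0 : ((-(n : ℤ)) % (r : ℤ)) = (m : ℤ) :=
    (Int.toNat_of_nonneg (Int.emod_nonneg _ (by omega))).symm
  have hmr : m < r := by
    have := Int.emod_lt_of_pos (-(n:ℤ)) hrz
    omega
  have hdvdZ : (r:ℤ) ∣ ((n:ℤ) + m) := by
    have h := Int.emod_add_mul_ediv (-(n:ℤ)) (r:ℤ)
    refine ⟨-((-(n:ℤ))/(r:ℤ)), ?_⟩
    rw [← hm0]; linarith
  have hdvd : r ∣ (n + m) := by exact_mod_cast hdvdZ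
  set q : ℕ := (n + m) / r with hqdef
  have hq : n + m = q * r := (Nat.div_mul_cancel hdvd).symm
  -- rewrite the i-sum using div_val
  have hsum1 : ∑ i ∈ Finset.Icc 1 (r - 1),
        ((((b * (i:ℕ)) % (r : ℤ) : ℤ) : ℚ) * ((r : ℚ) - (((b * (i:ℕ)) % (r : ℤ) : ℤ) : ℚ)) / (2 * r))
          * (if i ≤ n then (((n - i) / r + 1 : ℕ) : ℚ) else 0)
      = ∑ i ∈ Finset.Icc 1 (r - 1),
        ((((b * (i:ℕ)) % (r : ℤ) : ℤ) : ℚ) * ((r : ℚ) - (((b * (i:ℕ)) % (r : ℤ) : ℤ) : ℚ)) / (2 * r))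
          * ((q:ℚ) - (if r < m + i then 1 else 0)) := by
    refine Finset.sum_congr rfl ?_
    intro i hi
    simp only [Finset.mem_Icc] at hi
    rw [div_val r m q n i hr hmr hq hi.1 hi.2]
  rw [hsum1]
  -- total weight
  have hW : ∑ i ∈ Finset.Icc 1 (r - 1),
        (((b * (i:ℕ)) % (r : ℤ) : ℤ) : ℚ) * ((r : ℚ) - (((b * (i:ℕ)) % (r : ℤ) : ℤ) : ℚ)) / (2 * r)
      = ((r:ℚ)^2 - 1) / 12 := by
    have hcast : ∀ i : ℕ,
        (((b * (i:ℕ)) % (r : ℤ) : ℤ) : ℚ) * ((r : ℚ) - (((b * (i:ℕ)) % (r : ℤ) : ℤ) : ℚ)) / (2 * r)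
          = ((((b * (i:ℕ)) % (r : ℤ)).toNat : ℚ) * ((r : ℚ) - (((b * (i:ℕ)) % (r : ℤ)).toNat : ℚ)) / (2 * r)) := by
      intro i
      have h := Int.toNat_of_nonneg (Int.emod_nonneg (b * (i:ℤ)) (show (r:ℤ) ≠ 0 by omega))
      conv_lhs => rw [← h]
      push_cast
      ring
    rw [Finset.sum_congr rfl (fun i _ => hcast i),
      perm_sum r (by omega) b hb (fun u => (u:ℚ) * ((r : ℚ) - (u:ℚ)) / (2 * r)),
      w_total r (by omega)]
  -- symmetric sums
  have hG : ∀ x : ℤ, 1 ≤ x → x < (r:ℤ) →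
      (((r:ℤ) - x : ℤ) : ℚ) * ((r : ℚ) - (((r:ℤ) - x : ℤ) : ℚ)) / (2 * r)
        = ((x : ℤ) : ℚ) * ((r : ℚ) - ((x : ℤ) : ℚ)) / (2 * r) := by
    intro x _ _
    push_cast
    ring
  have hsym := sym_sum r hr b hb m hmr
      (fun x => ((x : ℤ) : ℚ) * ((r : ℚ) - ((x : ℤ) : ℚ)) / (2 * r)) hG
  -- filter identity
  have hfilter : (Finset.Icc 1 (r-1)).filter (fun i => r < m + i) = Finset.Icc (r - m + 1) (r - 1) := by
    ext i
    simp only [Finset.mem_filter, Finset.mem_Icc]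
    omega
  -- put things together
  have hexp : ∑ i ∈ Finset.Icc 1 (r - 1),
        ((((b * (i:ℕ)) % (r : ℤ) : ℤ) : ℚ) * ((r : ℚ) - (((b * (i:ℕ)) % (r : ℤ) : ℤ) : ℚ)) / (2 * r))
          * ((q:ℚ) - (if r < m + i then 1 else 0))
      = (q:ℚ) * (((r:ℚ)^2 - 1) / 12)
        - ∑ i ∈ Finset.Icc (r - m + 1) (r - 1),
            (((b * (i:ℕ)) % (r : ℤ) : ℤ) : ℚ) * ((r : ℚ) - (((b * (i:ℕ)) % (r : ℤ) : ℤ) : ℚ)) / (2 * r) := by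
    have : ∀ i ∈ Finset.Icc 1 (r-1),
        ((((b * (i:ℕ)) % (r : ℤ) : ℤ) : ℚ) * ((r : ℚ) - (((b * (i:ℕ)) % (r : ℤ) : ℤ) : ℚ)) / (2 * r))
          * ((q:ℚ) - (if r < m + i then 1 else 0))
        = (q:ℚ) * ((((b * (i:ℕ)) % (r : ℤ) : ℤ) : ℚ) * ((r : ℚ) - (((b * (i:ℕ)) % (r : ℤ) : ℤ) : ℚ)) / (2 * r))
          - (if r < m + i then
              (((b * (i:ℕ)) % (r : ℤ) : ℤ) : ℚ) * ((r : ℚ) - (((b * (i:ℕ)) % (r : ℤ) : ℤ) : ℚ)) / (2 * r)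
            else 0) := by
      intro i _
      by_cases h : r < m + i <;> simp [h] <;> ring
    rw [Finset.sum_congr rfl this, Finset.sum_sub_distrib, ← Finset.mul_sum, hW,
      ← Finset.sum_filter, hfilter]
  rw [hexp, hm0]
  rw [hsym]
  have hqv : (q:ℚ) = ((n:ℚ) + (m:ℚ)) / (r:ℚ) := by
    have h2 : ((n:ℚ) + (m:ℚ)) = (q:ℚ) * (r:ℚ) := by exact_mod_cast hq
    have hr0 : (r:ℚ) ≠ 0 := by exact_mod_cast (by omega : r ≠ 0)
    field_simp
    linarith
  rw [hqv]
  have hr0 : (r:ℚ) ≠ 0 := by exact_mod_cast (by omega : r ≠ 0)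
  generalize (∑ i ∈ Finset.Icc (r - m + 1) (r - 1),
      (((b * (i:ℕ)) % (r : ℤ) : ℤ) : ℚ) * ((r : ℚ) - (((b * (i:ℕ)) % (r : ℤ) : ℤ) : ℚ)) / (2 * r)) = S
  push_cast
  field_simp
  ring

lemma coeff_term1 (n : ℕ) :
    (coeff (R := ℚ) n) ((1 + X) * PowerSeries.mk (fun n => (n : ℚ) + 1)) = 2 * (n:ℚ) + 1 := by
  have h : (1 + X) * PowerSeries.mk (fun n => (n : ℚ) + 1)
      = PowerSeries.mk (fun n => (n : ℚ) + 1) + PowerSeries.mk (fun n => (n : ℚ) + 1) * X ^ 1 := by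
    ring
  rw [h, map_add, coeff_mk, coeff_mul_X_pow']
  cases n with
  | zero => norm_num
  | succ k =>
    rw [if_pos (by omega)]
    simp only [Nat.add_sub_cancel, coeff_mk]
    push_cast
    ring

lemma coeff_term2 (K : ℚ) (n : ℕ) :
    (coeff (R := ℚ) n) (PowerSeries.C (R := ℚ) (K / 2) * (X + X ^ 2)
        * PowerSeries.mk (fun n => ((n:ℚ)+1)*((n:ℚ)+2)*((n:ℚ)+3)/6))
      = (2 * (n : ℚ) ^ 3 + 3 * (n : ℚ) ^ 2 + (n:ℚ)) / 12 * K := by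
  have h : PowerSeries.C (R := ℚ) (K / 2) * (X + X ^ 2)
        * PowerSeries.mk (fun n => ((n:ℚ)+1)*((n:ℚ)+2)*((n:ℚ)+3)/6)
      = PowerSeries.C (R := ℚ) (K / 2) * (PowerSeries.mk (fun n => ((n:ℚ)+1)*((n:ℚ)+2)*((n:ℚ)+3)/6) * X ^ 1)
        + PowerSeries.C (R := ℚ) (K / 2) * (PowerSeries.mk (fun n => ((n:ℚ)+1)*((n:ℚ)+2)*((n:ℚ)+3)/6) * X ^ 2) := by
    ring
  rw [h, map_add, coeff_C_mul, coeff_C_mul, coeff_mul_X_pow', coeff_mul_X_pow']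
  match n with
  | 0 => norm_num
  | 1 => norm_num; ring
  | (k+2) =>
    rw [if_pos (by omega), if_pos (by omega)]
    have e1 : k + 2 - 1 = k + 1 := by omega
    have e2 : k + 2 - 2 = k := by omega
    rw [e1, e2, coeff_mk, coeff_mk]
    push_cast
    ring

lemma coeff_term3 (r : ℕ) (c : ℕ → ℚ) (n : ℕ) :
    (coeff (R := ℚ) n) (PowerSeries.mk (fun n => ((n / r + 1 : ℕ) : ℚ))
        * ∑ i ∈ Finset.Icc 1 (r - 1), PowerSeries.C (R := ℚ) (c i) * X ^ i)
      = ∑ i ∈ Finset.Icc 1 (r - 1), c i * (if i ≤ n then (((n - i) / r + 1 : ℕ) : ℚ) else 0) := by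
  rw [Finset.mul_sum, map_sum]
  refine Finset.sum_congr rfl ?_
  intro i _
  have h : PowerSeries.mk (fun n => ((n / r + 1 : ℕ) : ℚ)) * (PowerSeries.C (R := ℚ) (c i) * X ^ i)
      = PowerSeries.C (R := ℚ) (c i) * (PowerSeries.mk (fun n => ((n / r + 1 : ℕ) : ℚ)) * X ^ i) := by
    ring
  rw [h, coeff_C_mul, coeff_mul_X_pow']
  by_cases hin : i ≤ n
  · rw [if_pos hin, if_pos hin, coeff_mk]
  · rw [if_neg hin, if_neg hin]


/-- Altınok's Hilbert series formula (Theorem 2.2 of the paper), as a power series identity.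
For a finite basket of singularities of types `(1/r_j)(b_j,1,−1)` and `K = −K_Y³ ∈ ℚ`, with
`χ(n)` the value of Reid's Orbifold Riemann–Roch formula for `χ(O_Y(−nK_Y))` (with
`χ(O_Y) = 1` and `−K_Y·c₂ = 24 − ∑_j (r_j²−1)/r_j`), one has in `ℚ⟦t⟧`:
`∑_{n≥0} χ(n)tⁿ = (1+t)/(1−t)² + (K/2)(t+t²)/(1−t)⁴
   − ∑_j (1/((1−t)(1−t^{r_j})))·∑_{i=1}^{r_j−1} [b_j i]_{r_j}(r_j−[b_j i]_{r_j})/(2r_j)·t^i`. -/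
theorem altinok_hilbert_series_formula {J : Type*} [Fintype J]
    (r : J → ℕ) (hr : ∀ j, 2 ≤ r j) (b : J → ℤ)
    (hb : ∀ j, IsCoprime (b j) ((r j : ℤ))) (K : ℚ)
    (χ : ℕ → ℚ)
    (hχ : ∀ n : ℕ, χ n =
      1 + ((2 * (n : ℚ) ^ 3 + 3 * (n : ℚ) ^ 2 + n) / 12) * K
        + ((n : ℚ) / 12) * (24 - ∑ j, ((r j : ℚ) ^ 2 - 1) / (r j))
        + ∑ j, (-((((-(n : ℤ)) % (r j : ℤ)) : ℤ) : ℚ) * ((r j : ℚ) ^ 2 - 1) / (12 * r j)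
            + ∑ k ∈ Finset.Icc (1 : ℤ) ((-(n : ℤ)) % (r j : ℤ) - 1),
                (((b j * k) % (r j : ℤ) : ℤ) : ℚ)
                  * ((r j : ℚ) - (((b j * k) % (r j : ℤ) : ℤ) : ℚ)) / (2 * r j))) :
    PowerSeries.mk χ
      = (1 + X) * ((1 - X) ^ 2)⁻¹
        + PowerSeries.C (R := ℚ) (K / 2) * (X + X ^ 2) * ((1 - X) ^ 4)⁻¹
        - ∑ j, ((1 - X) * (1 - X ^ (r j)))⁻¹
            * ∑ i ∈ Finset.Icc 1 (r j - 1),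
                PowerSeries.C (R := ℚ) ((((b j * i) % (r j : ℤ) : ℤ) : ℚ)
                    * ((r j : ℚ) - (((b j * i) % (r j : ℤ) : ℤ) : ℚ)) / (2 * r j))
                  * (X : PowerSeries ℚ) ^ i := by
  rw [inv_one_sub_sq, inv_one_sub_four]
  have hsum : (∑ j, ((1 - X : PowerSeries ℚ) * (1 - X ^ (r j)))⁻¹
            * ∑ i ∈ Finset.Icc 1 (r j - 1),
                PowerSeries.C (R := ℚ) ((((b j * i) % (r j : ℤ) : ℤ) : ℚ)
                    * ((r j : ℚ) - (((b j * i) % (r j : ℤ) : ℤ) : ℚ)) / (2 * r j))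
                  * (X : PowerSeries ℚ) ^ i)
      = ∑ j, PowerSeries.mk (fun n => ((n / (r j) + 1 : ℕ) : ℚ))
            * ∑ i ∈ Finset.Icc 1 (r j - 1),
                PowerSeries.C (R := ℚ) ((((b j * i) % (r j : ℤ) : ℤ) : ℚ)
                    * ((r j : ℚ) - (((b j * i) % (r j : ℤ) : ℤ) : ℚ)) / (2 * r j))
                  * (X : PowerSeries ℚ) ^ i := by
    refine Finset.sum_congr rfl ?_
    intro j _
    rw [inv_one_sub_mul (r j) (by have := hr j; omega)]
  rw [hsum]
  ext n
  rw [coeff_mk, map_sub, map_add, coeff_term1, coeff_term2 K n, map_sum]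
  have hterm3 : ∀ j : J, (coeff (R := ℚ) n) (PowerSeries.mk (fun n => ((n / (r j) + 1 : ℕ) : ℚ))
            * ∑ i ∈ Finset.Icc 1 (r j - 1),
                PowerSeries.C (R := ℚ) ((((b j * i) % (r j : ℤ) : ℤ) : ℚ)
                    * ((r j : ℚ) - (((b j * i) % (r j : ℤ) : ℤ) : ℚ)) / (2 * r j))
                  * (X : PowerSeries ℚ) ^ i)
      = ∑ i ∈ Finset.Icc 1 (r j - 1),
          ((((b j * i) % (r j : ℤ) : ℤ) : ℚ)
              * ((r j : ℚ) - (((b j * i) % (r j : ℤ) : ℤ) : ℚ)) / (2 * r j))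
            * (if i ≤ n then (((n - i) / (r j) + 1 : ℕ) : ℚ) else 0) :=
    fun j => coeff_term3 (r j) _ n
  rw [Finset.sum_congr rfl (fun j _ => hterm3 j), hχ n]
  have hAB : ∑ j, (-((((-(n : ℤ)) % (r j : ℤ)) : ℤ) : ℚ) * ((r j : ℚ) ^ 2 - 1) / (12 * r j)
            + ∑ k ∈ Finset.Icc (1 : ℤ) ((-(n : ℤ)) % (r j : ℤ) - 1),
                (((b j * k) % (r j : ℤ) : ℤ) : ℚ)
                  * ((r j : ℚ) - (((b j * k) % (r j : ℤ) : ℤ) : ℚ)) / (2 * r j))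
      = ∑ j, (((n : ℚ) / 12) * (((r j : ℚ) ^ 2 - 1) / (r j : ℚ))
          - ∑ i ∈ Finset.Icc 1 (r j - 1),
              ((((b j * i) % (r j : ℤ) : ℤ) : ℚ)
                  * ((r j : ℚ) - (((b j * i) % (r j : ℤ) : ℤ) : ℚ)) / (2 * r j))
                * (if i ≤ n then (((n - i) / (r j) + 1 : ℕ) : ℚ) else 0)) := by
    refine Finset.sum_congr rfl ?_
    intro j _
    have := perj (r j) (hr j) (b j) (hb j) n
    linarith
  rw [hAB, Finset.sum_sub_distrib, ← Finset.mul_sum]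
  ring
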